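/- For N = 4a² + 1 with a odd and a > 3, the real number u = 1/((√N + 1)/4 − ⌊(√N + 1)/4⌋) is greater than 1 and its Galois conjugate (obtained by replacing √N with −√N) lies strictly between −1 and 0. -/
import Mathlib


/-- For `N = 4a² + 1` with `a` odd and `a > 3`, the number
`u = 1/((√N + 1)/4 − ⌊(√N + 1)/4⌋)` is greater than `1`, and its Galois conjugate
(obtained by replacing `√N` with `−√N`) lies strictly between `−1` and `0`. -/
theorem gauss_image_gt_one_and_conj_between (a N : ℤ) (ha : Odd a) (ha3 : 3 < a)
    (hN : N = 4 * a ^ 2 + 1) :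
    1 < ((Real.sqrt N + 1) / 4 - ⌊(Real.sqrt N + 1) / 4⌋)⁻¹ ∧
    -1 < ((-Real.sqrt N + 1) / 4 - ⌊(Real.sqrt N + 1) / 4⌋)⁻¹ ∧
    ((-Real.sqrt N + 1) / 4 - ⌊(Real.sqrt N + 1) / 4⌋)⁻¹ < 0 := by
  obtain ⟨m, hm⟩ := ha
  have hm2 : 2 ≤ m := by omega
  set s := Real.sqrt N with hs
  have hma : (a:ℝ) = 2*(m:ℝ) + 1 := by exact_mod_cast hm
  have hmr : (2:ℝ) ≤ (m:ℝ) := by exact_mod_cast hm2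
  have hNr : (N:ℝ) = 4*(a:ℝ)^2 + 1 := by exact_mod_cast hN
  have h1 : (2*(a:ℝ)) < s := by
    rw [hs, show (2*(a:ℝ)) = Real.sqrt ((2*(a:ℝ))^2) from
      (Real.sqrt_sq (by nlinarith)).symm]
    apply Real.sqrt_lt_sqrt (by positivity)
    nlinarith
  have h2 : s < 2*(a:ℝ) + 1 := by
    rw [hs]
    exact (Real.sqrt_lt' (by nlinarith)).mpr (by nlinarith)
  have hfloor : ⌊(s + 1) / 4⌋ = m := by
    rw [Int.floor_eq_iff]
    constructor
    · nlinarith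
    · nlinarith
  rw [hfloor]
  have hx1 : 0 < (s + 1) / 4 - (m:ℝ) := by nlinarith
  have hx2 : (s + 1) / 4 - (m:ℝ) < 1 := by nlinarith
  have hd : (-s + 1) / 4 - (m:ℝ) < -1 := by nlinarith
  have hdneg : (-s + 1) / 4 - (m:ℝ) < 0 := by linarith
  refine ⟨one_lt_inv₀ hx1 |>.mpr hx2, ?_, inv_neg''.mpr hdneg⟩
  set d := (-s + 1) / 4 - (m:ℝ)
  have := (inv_lt_inv_of_neg (by norm_num : (-1:ℝ) < 0) hdneg).mpr hd
  rw [show ((-1:ℝ))⁻¹ = -1 by norm_num] at this; exact this
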